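/- Fix a k-local property P = P(F) of [n]^d-arrays over Σ, an [n]^d-array A over Σ, and an (n,d,k,w)-system of grids (G_0,...,G_r), and let W be the family of all maximal (P,A)-witness blocks. Then every F-copy in A lies inside ⋃_{B∈W} B̄. -/

import Mathlib

open Finset

/-- `I[:ℓ]`: the set of the `ℓ` smallest elements of `I` (or `I` itself if `|I| < ℓ`). -/
def takeSmallest (I : Finset ℕ) (ℓ : ℕ) : Finset ℕ :=
  I.filter fun x => (I.filter fun y => y ≤ x).card ≤ ℓ

/-- `I[ℓ+1:] = I \ I[:ℓ]`. -/
def dropSmallest (I : Finset ℕ) (ℓ : ℕ) : Finset ℕ :=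
  I \ takeSmallest I ℓ

/-- An `(n,w)`-interval partition: a partition of `[n] = {1,…,n}` into consecutive,
pairwise disjoint intervals `I_1, …, I_t`, each of size `w` or `w+1`, where for `j < j'`
every element of `I j` is smaller than every element of `I j'`. -/
structure IntervalPartition (n w : ℕ) where
  t : ℕ
  I : Fin t → Finset ℕ
  interval : ∀ j, ∃ a b, 1 ≤ a ∧ a ≤ b ∧ b ≤ n ∧ I j = Finset.Icc a b
  size : ∀ j, (I j).card = w ∨ (I j).card = w + 1
  cover : ∀ x ∈ Finset.Icc 1 n, ∃ j, x ∈ I j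
  ordered : ∀ j j' : Fin t, j < j' → ∀ x ∈ I j, ∀ y ∈ I j', x < y

/-- The hypergrid `[n]^d`, as a set of tuples. -/
def cube (n d : ℕ) : Set (Fin d → ℕ) :=
  {x | ∀ i, 1 ≤ x i ∧ x i ≤ n}

/-- The `(n,d,k,w)`-grid induced by an `(n,w)`-interval partition. -/
def gridOf (n d k w : ℕ) (P : IntervalPartition n w) : Set (Fin d → ℕ) :=
  {x ∈ cube n d | ∃ i : Fin d, ∃ j : Fin P.t, x i ∈ takeSmallest (P.I j) (k - 1)}

/-- `G ∈ 𝒢(n,d,k,w)`: `G` is the grid induced by some `(n,w)`-interval partition. -/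
def IsGrid (n d k w : ℕ) (G : Set (Fin d → ℕ)) : Prop :=
  ∃ P : IntervalPartition n w, G = gridOf n d k w P

/-- Two entries of `[n]^d` are neighbors if `∑ i, |x i − y i| = 1`. -/
def Neighbor {d : ℕ} (x y : Fin d → ℕ) : Prop :=
  (∑ i, Nat.dist (x i) (y i)) = 1

/-- A `G`-block: a connected component of the neighborhood graph on `[n]^d \ G`. -/
def IsBlock (n d : ℕ) (G B : Set (Fin d → ℕ)) : Prop :=
  B.Nonempty ∧ B ⊆ cube n d \ G ∧
    (∀ x ∈ B, ∀ y ∈ B,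
      Relation.ReflTransGen
        (fun a b => a ∈ cube n d \ G ∧ b ∈ cube n d \ G ∧ Neighbor a b) x y) ∧
    (∀ x ∈ B, ∀ y, y ∈ cube n d \ G → Neighbor x y → y ∈ B)

/-- The closure `B̄` of a block `B`. -/
def blockClosure (n d k : ℕ) (B : Set (Fin d → ℕ)) : Set (Fin d → ℕ) :=
  {x ∈ cube n d | ∃ y ∈ B, ∀ i, Nat.dist (x i) (y i) < k}

/-- The boundary `∂B = B̄ \ B` of a block `B`. -/
def blockBoundary (n d k : ℕ) (B : Set (Fin d → ℕ)) : Set (Fin d → ℕ) :=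
  blockClosure n d k B \ B

/-- A valid location of a width-`k` subarray in `[n]^d`: an element of `[n−k+1]^d`. -/
def ValidLoc (n d k : ℕ) (a : Fin d → ℕ) : Prop :=
  ∀ i, 1 ≤ a i ∧ a i ≤ n - k + 1

/-- The width-`k` box with lowest corner `a`: `{a_1,…,a_1+k−1} × ⋯ × {a_d,…,a_d+k−1}`. -/
def kbox (d k : ℕ) (a : Fin d → ℕ) : Set (Fin d → ℕ) :=
  {x | ∀ i, a i ≤ x i ∧ x i ≤ a i + k - 1}

/-- Some forbidden pattern of `F` occurs as a consecutive subarray of `A` at location `a`;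
patterns are compared on `[k]^d`. -/
def HasCopyAt {σ : Type*} (d k : ℕ) (F : Set ((Fin d → ℕ) → σ))
    (A : (Fin d → ℕ) → σ) (a : Fin d → ℕ) : Prop :=
  ∃ S ∈ F, ∀ j : Fin d → ℕ, (∀ i, 1 ≤ j i ∧ j i ≤ k) →
    A (fun i => a i + j i - 1) = S j

/-- `A` contains an `F`-copy lying inside the set `X`. -/
def HasCopyIn {σ : Type*} (n d k : ℕ) (F : Set ((Fin d → ℕ) → σ))
    (A : (Fin d → ℕ) → σ) (X : Set (Fin d → ℕ)) : Prop :=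
  ∃ a, ValidLoc n d k a ∧ HasCopyAt d k F A a ∧ kbox d k a ⊆ X

/-- `A` satisfies the `k`-local property `P(F)`: it contains no `F`-copy. -/
def SatisfiesP {σ : Type*} (n d k : ℕ) (F : Set ((Fin d → ℕ) → σ))
    (A : (Fin d → ℕ) → σ) : Prop :=
  ¬ ∃ a, ValidLoc n d k a ∧ HasCopyAt d k F A a

/-- `A` is `ε`-far from `P(F)`: every array satisfying `P(F)` differs from `A`
in at least `ε·n^d` entries of `[n]^d`. -/
def FarFrom {σ : Type*} (n d k : ℕ) (F : Set ((Fin d → ℕ) → σ)) (ε : ℝ)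
    (A : (Fin d → ℕ) → σ) : Prop :=
  ∀ A' : (Fin d → ℕ) → σ, SatisfiesP n d k F A' →
    ε * (n : ℝ) ^ d ≤ ({x | x ∈ cube n d ∧ A x ≠ A' x}).ncard

/-- A block `B` is `(P,A)`-unrepairable: every array agreeing with `A` on `∂B`
(including `A` itself) contains an `F`-copy lying inside `B̄`. -/
def Unrepairable {σ : Type*} (n d k : ℕ) (F : Set ((Fin d → ℕ) → σ))
    (A : (Fin d → ℕ) → σ) (B : Set (Fin d → ℕ)) : Prop :=
  ∀ A' : (Fin d → ℕ) → σ, (∀ x ∈ blockBoundary n d k B, A' x = A x) →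
    HasCopyIn n d k F A' (blockClosure n d k B)

/-- `r = ⌊log₂(n/w)⌋`. -/
def sysR (n w : ℕ) : ℕ := Nat.log 2 (n / w)

/-- An `(n,d,k,w)`-system of grids `(G_0, …, G_r)` with `r = ⌊log₂(n/w)⌋`:
`G_i ∈ 𝒢(n,d,k,⌊n/2^(r−i)⌋)` and `G_0 ⊇ G_1 ⊇ ⋯ ⊇ G_r`. -/
structure GridSystem (n d k w : ℕ) where
  G : ℕ → Set (Fin d → ℕ)
  isGrid : ∀ i ≤ sysR n w, IsGrid n d k (n / 2 ^ (sysR n w - i)) (G i)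
  nested : ∀ i j : ℕ, j ≤ i → i ≤ sysR n w → G i ⊆ G j

/-- A `G_i`-block `B` is a `(P,A)`-witness: either `i = 0` and `A` contains an `F`-copy
inside `B̄`, or `i > 0` and `B` is `(P,A)`-unrepairable. -/
def IsWitness {σ : Type*} (n d k w : ℕ) (S : GridSystem n d k w)
    (F : Set ((Fin d → ℕ) → σ)) (A : (Fin d → ℕ) → σ)
    (i : ℕ) (B : Set (Fin d → ℕ)) : Prop :=
  i ≤ sysR n w ∧ IsBlock n d (S.G i) B ∧
    ((i = 0 ∧ HasCopyIn n d k F A (blockClosure n d k B)) ∨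
      (0 < i ∧ Unrepairable n d k F A B))

/-- A witness is maximal if all of its ancestors (blocks of coarser grids containing it)
are `(P,A)`-repairable. -/
def IsMaximalWitness {σ : Type*} (n d k w : ℕ) (S : GridSystem n d k w)
    (F : Set ((Fin d → ℕ) → σ)) (A : (Fin d → ℕ) → σ)
    (i : ℕ) (B : Set (Fin d → ℕ)) : Prop :=
  IsWitness n d k w S F A i B ∧
    ∀ j, i < j → j ≤ sysR n w → ∀ B', IsBlock n d (S.G j) B' → B ⊆ B' →
      ¬ Unrepairable n d k F A B'

/-- The family `W` of all maximal `(P,A)`-witness blocks. -/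
def MaxWitnessFamily {σ : Type*} (n d k w : ℕ) (S : GridSystem n d k w)
    (F : Set ((Fin d → ℕ) → σ)) (A : (Fin d → ℕ) → σ) :
    Set (Set (Fin d → ℕ)) :=
  {B | ∃ i, IsMaximalWitness n d k w S F A i B}

/-- `Par(B)` for a `G_i`-block `B`: the `G_{i+1}`-block containing `B` if `i < r`
(expressed as the union of all such blocks, of which there is exactly one), and
`[n]^d` for `i = r`. -/
def parentSet (n d k w : ℕ) (S : GridSystem n d k w) (i : ℕ)
    (B : Set (Fin d → ℕ)) : Set (Fin d → ℕ) :=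
  if i = sysR n w then cube n d
  else ⋃₀ {B' | IsBlock n d (S.G (i + 1)) B' ∧ B ⊆ B'}

lemma takeSmallest_subset (I : Finset ℕ) (ℓ : ℕ) : takeSmallest I ℓ ⊆ I :=
  Finset.filter_subset _ _

lemma mem_takeSmallest_Icc {α β ℓ x : ℕ} (h1 : α ≤ x) (h2 : x ≤ β) :
    x ∈ takeSmallest (Finset.Icc α β) ℓ ↔ x + 1 ≤ α + ℓ := by
  have hf : (Finset.Icc α β).filter (fun y => y ≤ x) = Finset.Icc α x := by
    ext y; simp only [Finset.mem_filter, Finset.mem_Icc]; omega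
  simp only [takeSmallest, Finset.mem_filter, Finset.mem_Icc, hf, Nat.card_Icc]
  omega

lemma ip_disjoint {n w : ℕ} (P : IntervalPartition n w) {j j' : Fin P.t}
    {x : ℕ} (hx : x ∈ P.I j) (hx' : x ∈ P.I j') : j = j' := by
  by_contra h
  rcases lt_or_gt_of_ne h with hlt | hlt
  · exact lt_irrefl x (P.ordered j j' hlt x hx x hx')
  · exact lt_irrefl x (P.ordered j' j hlt x hx' x hx)

lemma ip_card_ge {n w : ℕ} (P : IntervalPartition n w) (j : Fin P.t) :
    w ≤ (P.I j).card := by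
  rcases P.size j with h | h <;> omega

lemma exists_good_col (n k w' : ℕ) (hk : 2 ≤ k) (hkw : k ≤ w')
    (P : IntervalPartition n w') (a : ℕ) (ha1 : 1 ≤ a) (ha2 : a + k - 1 ≤ n) :
    ∃ c, a ≤ c ∧ c ≤ a + k - 1 ∧ ∀ j, c ∉ takeSmallest (P.I j) (k - 1) := by
  have htop : a + k - 1 ∈ Finset.Icc 1 n := by simp [Finset.mem_Icc]; omega
  obtain ⟨j0, hj0⟩ := P.cover _ htop
  obtain ⟨α, β, hα1, hαβ, hβn, hIj0⟩ := P.interval j0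
  rw [hIj0, Finset.mem_Icc] at hj0
  have hcard0 : w' ≤ (P.I j0).card := ip_card_ge P j0
  rw [hIj0, Nat.card_Icc] at hcard0
  by_cases hcase : α ≤ a
  · -- window inside I j0
    refine ⟨max a (α + k - 1), le_max_left _ _, by omega, fun j hmem => ?_⟩
    have hmemI : max a (α + k - 1) ∈ P.I j := takeSmallest_subset _ _ hmem
    have hmem0 : max a (α + k - 1) ∈ P.I j0 := by
      rw [hIj0, Finset.mem_Icc]; omega
    have hjj : j = j0 := ip_disjoint P hmemI hmem0
    subst hjj
    rw [hIj0] at hmem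
    rw [mem_takeSmallest_Icc (by omega) (by omega)] at hmem
    omega
  · -- window spans a boundary; take c = α - 1, the last element of its interval
    push_neg at hcase
    have hc1 : (1:ℕ) ≤ α - 1 := by omega
    have hcmem : α - 1 ∈ Finset.Icc 1 n := by simp [Finset.mem_Icc]; omega
    obtain ⟨j1, hj1⟩ := P.cover _ hcmem
    obtain ⟨α', β', hα'1, hαβ', hβn', hIj1⟩ := P.interval j1
    rw [hIj1, Finset.mem_Icc] at hj1
    have hcard1 : w' ≤ (P.I j1).card := ip_card_ge P j1
    rw [hIj1, Nat.card_Icc] at hcard1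
    -- show β' = α - 1
    have hβ'lt : β' ≤ α - 1 := by
      by_contra hβ'
      push_neg at hβ'
      have hαmem1 : α ∈ P.I j1 := by rw [hIj1, Finset.mem_Icc]; omega
      have hαmem0 : α ∈ P.I j0 := by rw [hIj0, Finset.mem_Icc]; omega
      have hjj : j1 = j0 := ip_disjoint P hαmem1 hαmem0
      subst hjj
      have hmm : α - 1 ∈ P.I j1 := by rw [hIj1, Finset.mem_Icc]; omega
      rw [hIj0, Finset.mem_Icc] at hmm
      omega
    refine ⟨α - 1, by omega, by omega, fun j hmem => ?_⟩
    have hmemI : α - 1 ∈ P.I j := takeSmallest_subset _ _ hmem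
    have hmem1 : α - 1 ∈ P.I j1 := by rw [hIj1, Finset.mem_Icc]; omega
    have hjj : j = j1 := ip_disjoint P hmemI hmem1
    subst hjj
    rw [hIj1] at hmem
    rw [mem_takeSmallest_Icc (by omega) (by omega)] at hmem
    omega

lemma neighbor_symm {d : ℕ} {x y : Fin d → ℕ} (h : Neighbor x y) : Neighbor y x := by
  unfold Neighbor at *
  rw [← h]
  exact Finset.sum_congr rfl fun i _ => Nat.dist_comm _ _

lemma isBlock_component (n d : ℕ) (G : Set (Fin d → ℕ)) (x : Fin d → ℕ)
    (hx : x ∈ cube n d \ G) :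
    IsBlock n d G {y | y ∈ cube n d \ G ∧
      Relation.ReflTransGen
        (fun a b => a ∈ cube n d \ G ∧ b ∈ cube n d \ G ∧ Neighbor a b) x y} := by
  set R := fun a b => a ∈ cube n d \ G ∧ b ∈ cube n d \ G ∧ Neighbor a b with hR
  have hRsymm : Symmetric R := fun a b ⟨h1, h2, h3⟩ => ⟨h2, h1, neighbor_symm h3⟩
  refine ⟨⟨x, hx, Relation.ReflTransGen.refl⟩, fun y hy => hy.1, ?_, ?_⟩
  · rintro y ⟨hy, hxy⟩ z ⟨hz, hxz⟩
    exact Relation.ReflTransGen.trans ((haveI : Std.Symm R := ⟨hRsymm⟩; Std.Symm.symm (r := Relation.ReflTransGen R) _ _ hxy)) hxz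
  · rintro y ⟨hy, hxy⟩ z hz hnb
    exact ⟨hz, hxy.tail ⟨hy, hz, hnb⟩⟩

lemma blockClosure_mono {n d k : ℕ} {B B' : Set (Fin d → ℕ)} (h : B ⊆ B') :
    blockClosure n d k B ⊆ blockClosure n d k B' := by
  rintro x ⟨hc, y, hy, hd⟩
  exact ⟨hc, y, h hy, hd⟩

lemma exists_maximal_witness (n d k w : ℕ) {σ : Type*} (F : Set ((Fin d → ℕ) → σ))
    (A : (Fin d → ℕ) → σ) (S : GridSystem n d k w) :
    ∀ m i B, sysR n w - i ≤ m → IsWitness n d k w S F A i B →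
      ∃ B', B' ∈ MaxWitnessFamily n d k w S F A ∧
        blockClosure n d k B ⊆ blockClosure n d k B' := by
  intro m
  induction m with
  | zero =>
    intro i B hm hw
    refine ⟨B, ⟨i, hw, fun j hij hjr B' _ _ => ?_⟩, subset_rfl⟩
    have := hw.1; omega
  | succ m ih =>
    intro i B hm hw
    by_cases hmax : IsMaximalWitness n d k w S F A i B
    · exact ⟨B, ⟨i, hmax⟩, subset_rfl⟩
    · have hQ : ¬ ∀ j, i < j → j ≤ sysR n w → ∀ B', IsBlock n d (S.G j) B' → B ⊆ B' →
          ¬ Unrepairable n d k F A B' := fun h => hmax ⟨hw, h⟩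
      push_neg at hQ
      obtain ⟨j, hij, hjr, B', hblock, hsub, hunrep⟩ := hQ
      have hw' : IsWitness n d k w S F A j B' :=
        ⟨hjr, hblock, Or.inr ⟨by omega, hunrep⟩⟩
      obtain ⟨B'', hB''mem, hB''cl⟩ := ih j B' (by omega) hw'
      exact ⟨B'', hB''mem, (blockClosure_mono hsub).trans hB''cl⟩

/-- Every `F`-copy in `A` lies inside `⋃_{B ∈ W} B̄`, where `W` is the
family of all maximal `(P,A)`-witness blocks. -/
theorem copies_in_maximal_witness_closures (n d k w : ℕ) (hd : 1 ≤ d) (hk : 2 ≤ k)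
    (hkw : k ≤ w) (hwn : w ≤ n) {σ : Type*} (F : Set ((Fin d → ℕ) → σ))
    (A : (Fin d → ℕ) → σ) (S : GridSystem n d k w) :
    ∀ a : Fin d → ℕ, ValidLoc n d k a → HasCopyAt d k F A a →
      kbox d k a ⊆ ⋃ B ∈ MaxWitnessFamily n d k w S F A, blockClosure n d k B := by
  intro a hva hca
  have hkn : k ≤ n := hkw.trans hwn
  -- width of G 0 is at least k
  set w0 := n / 2 ^ (sysR n w) with hw0
  have hq1 : 1 ≤ n / w := Nat.one_le_div_iff (by omega) |>.mpr hwn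
  have hpow : 2 ^ (sysR n w) ≤ n / w := Nat.pow_log_le_self 2 (by omega)
  have hkw0 : k ≤ w0 := by
    have h1 : n / (n / w) ≤ w0 := Nat.div_le_div_left hpow (Nat.pow_pos (by norm_num))
    have h2 : w ≤ n / (n / w) := by
      rw [Nat.le_div_iff_mul_le (by omega)]
      calc w * (n / w) = (n / w) * w := mul_comm _ _
        _ ≤ n := Nat.div_mul_le_self n w
    omega
  -- get the grid G 0
  obtain ⟨P, hP⟩ := S.isGrid 0 (Nat.zero_le _)
  simp only [Nat.sub_zero] at hP
  -- find a point of the box off the grid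
  have hcol : ∀ i : Fin d, ∃ c, a i ≤ c ∧ c ≤ a i + k - 1 ∧
      ∀ j, c ∉ takeSmallest (P.I j) (k - 1) := by
    intro i
    have := hva i
    exact exists_good_col n k w0 hk hkw0 P (a i) this.1 (by omega)
  choose x hx1 hx2 hx3 using hcol
  have hxbox : x ∈ kbox d k a := fun i => ⟨hx1 i, hx2 i⟩
  have hboxcube : ∀ z ∈ kbox d k a, z ∈ cube n d := by
    intro z hz i
    have := hva i
    have := hz i
    omega
  have hxG : x ∈ cube n d \ S.G 0 := by
    refine ⟨hboxcube x hxbox, ?_⟩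
    rw [hP]
    rintro ⟨_, i, j, hmem⟩
    exact hx3 i j hmem
  -- the G_0-block containing x
  set B0 := {y | y ∈ cube n d \ S.G 0 ∧
      Relation.ReflTransGen
        (fun p q => p ∈ cube n d \ S.G 0 ∧ q ∈ cube n d \ S.G 0 ∧ Neighbor p q) x y}
    with hB0
  have hblock : IsBlock n d (S.G 0) B0 := isBlock_component n d (S.G 0) x hxG
  have hxB0 : x ∈ B0 := ⟨hxG, Relation.ReflTransGen.refl⟩
  have hboxcl : kbox d k a ⊆ blockClosure n d k B0 := by
    intro z hz
    refine ⟨hboxcube z hz, x, hxB0, fun i => ?_⟩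
    have h1 := hz i
    have h2 := hx1 i
    have h3 := hx2 i
    have : Nat.dist (z i) (x i) = z i - x i + (x i - z i) := rfl
    omega
  have hwitness : IsWitness n d k w S F A 0 B0 :=
    ⟨Nat.zero_le _, hblock, Or.inl ⟨rfl, a, hva, hca, hboxcl⟩⟩
  obtain ⟨B', hB'mem, hB'cl⟩ :=
    exists_maximal_witness n d k w F A S (sysR n w) 0 B0 (by omega) hwitness
  intro z hz
  exact Set.mem_biUnion hB'mem (hB'cl (hboxcl hz))
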